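/- For positive integers s_1,…,s_k, the bound is tight: there exists an n×n unitary matrix U (n = s_1+⋯+s_k), block diagonal with blocks of sizes s_1,…,s_k whose top rows are (1/√s_j,…,1/√s_j), such that the n×n matrix A obtained by taking, for each block j, s_j copies of the first row of that block satisfies |Per(A)|²/(s_1!⋯s_k!) = (s_1!⋯s_k!)/(s_1^{s_1}⋯s_k^{s_k}). -/

import Mathlib

/-- The permanent of a square matrix over an arbitrary finite index type. -/
noncomputable def perm {I : Type*} [Fintype I] [DecidableEq I]
    (A : Matrix I I ℂ) : ℂ :=
  ∑ σ : Equiv.Perm I, ∏ i, A i (σ i)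


open Matrix

lemma block_unitary (m : ℕ) (hm : 0 < m) :
    ∃ M : Matrix (Fin m) (Fin m) ℂ, M ∈ Matrix.unitaryGroup (Fin m) ℂ ∧
      ∀ b : Fin m, M ⟨0, hm⟩ b = 1 / (Real.sqrt m : ℂ) := by
  set v : EuclideanSpace ℂ (Fin m) := WithLp.toLp 2 (fun _ => 1 / (Real.sqrt m : ℂ)) with hv
  have hcard : Module.finrank ℂ (EuclideanSpace ℂ (Fin m)) = Fintype.card (Fin m) := by
    simp
  have hmR : (0:ℝ) < m := by exact_mod_cast hm
  have hnorm : ‖v‖ = 1 := by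
    rw [EuclideanSpace.norm_eq]
    have : ∀ i : Fin m, ‖v i‖ ^ 2 = 1 / m := by
      intro i
      simp only [hv, PiLp.toLp_apply, norm_div, norm_one, Complex.norm_real]
      rw [div_pow, one_pow, Real.norm_eq_abs, abs_of_pos (Real.sqrt_pos.2 hmR),
        Real.sq_sqrt hmR.le]
    rw [Finset.sum_congr rfl (fun i _ => this i)]
    simp only [Finset.sum_const, Finset.card_univ, Fintype.card_fin, nsmul_eq_mul]
    rw [mul_one_div, div_self hmR.ne']
    exact Real.sqrt_one
  have horth : Orthonormal ℂ (({⟨0, hm⟩} : Set (Fin m)).restrict (fun _ => v)) := by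
    rw [orthonormal_iff_ite]
    rintro ⟨i, hi⟩ ⟨j, hj⟩
    simp only [Set.mem_singleton_iff] at hi hj
    subst hi; subst hj
    simp [inner_self_eq_norm_sq_to_K, hnorm]
    exact Or.inl hnorm
  obtain ⟨b, hb⟩ := horth.exists_orthonormalBasis_extension_of_card_eq hcard
  refine ⟨Matrix.of fun i j => b i j, ?_, ?_⟩
  · rw [Matrix.mem_unitaryGroup_iff]
    ext i i'
    have key := (orthonormal_iff_ite.mp b.orthonormal) i' i
    rw [PiLp.inner_apply] at key
    simp only [Matrix.mul_apply, Matrix.star_apply, Matrix.one_apply, Matrix.of_apply]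
    simp only [RCLike.inner_apply] at key
    rw [show (∑ k, b i k * star (b i' k)) = ∑ k, b i k * (starRingEnd ℂ) (b i' k) by
      exact Finset.sum_congr rfl fun k _ => rfl]
    rw [key]
    by_cases h : i' = i
    · subst h; simp
    · simp [h, Ne.symm h]
  · intro j
    have := hb ⟨0, hm⟩ rfl
    exact congrArg (fun x => x j) this

-- counting lemma
lemma card_fiber_perms {k : ℕ} (s : Fin k → ℕ) :
    Fintype.card {σ : Equiv.Perm ((j : Fin k) × Fin (s j)) // ∀ i, (σ i).1 = i.1}
      = ∏ j, (s j).factorial := by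
  classical
  set I := (j : Fin k) × Fin (s j)
  have key : ∀ (x : I) (j : Fin k) (h : x.1 = j),
      (⟨j, Fin.cast (congrArg s h) x.2⟩ : I) = x := by
    rintro ⟨j', a⟩ j h
    dsimp at h; subst h; rfl
  let g : (∀ j, Equiv.Perm (Fin (s j))) → {σ : Equiv.Perm I // ∀ i, (σ i).1 = i.1} :=
    fun f => ⟨Equiv.Perm.sigmaCongrRightHom _ f, fun i => rfl⟩
  have hbij : Function.Bijective g := by
    constructor
    · intro f f' h
      exact Equiv.Perm.sigmaCongrRightHom_injective (congrArg Subtype.val h)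
    · rintro ⟨σ, hσ⟩
      have hσ' : ∀ i : I, (σ⁻¹ i).1 = i.1 := by
        intro i
        have := hσ (σ⁻¹ i)
        rw [show ∀ x, σ (σ⁻¹ x) = x from σ.apply_symm_apply] at this
        exact this.symm
      refine ⟨fun j => {
        toFun := fun a => Fin.cast (congrArg s (hσ ⟨j, a⟩)) (σ ⟨j, a⟩).2
        invFun := fun a => Fin.cast (congrArg s (hσ' ⟨j, a⟩)) (σ⁻¹ ⟨j, a⟩).2
        left_inv := ?_
        right_inv := ?_ }, ?_⟩
      · intro a
        have h1 : (⟨j, Fin.cast (congrArg s (hσ ⟨j, a⟩)) (σ ⟨j, a⟩).2⟩ : I) = σ ⟨j, a⟩ :=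
          key _ _ (hσ ⟨j, a⟩)
        apply Fin.ext
        rw [Fin.coe_cast, h1, show ∀ x, σ⁻¹ (σ x) = x from σ.symm_apply_apply]
      · intro a
        have h1 : (⟨j, Fin.cast (congrArg s (hσ' ⟨j, a⟩)) (σ⁻¹ ⟨j, a⟩).2⟩ : I) = σ⁻¹ ⟨j, a⟩ :=
          key _ _ (hσ' ⟨j, a⟩)
        apply Fin.ext
        rw [Fin.coe_cast, h1, show ∀ x, σ (σ⁻¹ x) = x from σ.apply_symm_apply]
      · apply Subtype.ext
        apply Equiv.ext
        rintro ⟨j, a⟩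
        exact key _ _ (hσ ⟨j, a⟩)
  rw [← Fintype.card_of_bijective hbij]
  simp [Fintype.card_perm]

theorem bunching_bound_tight (k : ℕ) (s : Fin k → ℕ) (hpos : ∀ j, 0 < s j) :
    ∃ U : Matrix ((j : Fin k) × Fin (s j)) ((j : Fin k) × Fin (s j)) ℂ,
      U ∈ Matrix.unitaryGroup ((j : Fin k) × Fin (s j)) ℂ ∧
      (∀ a b : (j : Fin k) × Fin (s j), a.1 ≠ b.1 → U a b = 0) ∧
      (∀ (j : Fin k) (b : Fin (s j)),
        U ⟨j, ⟨0, hpos j⟩⟩ ⟨j, b⟩ = 1 / (Real.sqrt (s j) : ℂ)) ∧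
      ‖perm (Matrix.of fun a b => U ⟨a.1, ⟨0, hpos a.1⟩⟩ b)‖ ^ 2
          / ((∏ j, (s j).factorial : ℕ) : ℝ)
        = ((∏ j, (s j).factorial : ℕ) : ℝ) / (∏ j, (s j : ℝ) ^ s j) := by
  classical
  choose M hMu hMrow using fun j => block_unitary (s j) (hpos j)
  set I := (j : Fin k) × Fin (s j)
  refine ⟨Matrix.blockDiagonal' M, ?_, ?_, ?_, ?_⟩
  · rw [Matrix.mem_unitaryGroup_iff]
    rw [Matrix.star_eq_conjTranspose, Matrix.blockDiagonal'_conjTranspose,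
      ← Matrix.blockDiagonal'_mul]
    have : (fun j => M j * (M j)ᴴ) = fun j => (1 : Matrix (Fin (s j)) (Fin (s j)) ℂ) := by
      funext j
      have := Matrix.mem_unitaryGroup_iff.mp (hMu j)
      rwa [Matrix.star_eq_conjTranspose] at this
    rw [this]
    exact Matrix.blockDiagonal'_one
  · rintro ⟨ja, a⟩ ⟨jb, b⟩ h
    exact Matrix.blockDiagonal'_apply_ne M a b h
  · intro j b
    rw [Matrix.blockDiagonal'_apply_eq]
    exact hMrow j b
  · -- permanent computation
    have hUrow : ∀ (j : Fin k) (x : I), x.1 = j →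
        Matrix.blockDiagonal' M ⟨j, ⟨0, hpos j⟩⟩ x = 1 / (Real.sqrt (s j) : ℂ) := by
      rintro j ⟨j', b⟩ h
      dsimp at h; subst h
      rw [Matrix.blockDiagonal'_apply_eq]
      exact hMrow j' b
    have hUzero : ∀ (j : Fin k) (x : I), x.1 ≠ j →
        Matrix.blockDiagonal' M ⟨j, ⟨0, hpos j⟩⟩ x = 0 := by
      rintro j ⟨j', b⟩ h
      exact Matrix.blockDiagonal'_apply_ne M _ _ (Ne.symm h)
    set c : ℂ := ∏ j, (1 / (Real.sqrt (s j) : ℂ)) ^ (s j) with hc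
    have hprod : ∀ σ : Equiv.Perm I,
        (∏ i, (Matrix.of fun (a b : I) =>
            Matrix.blockDiagonal' M ⟨a.1, ⟨0, hpos a.1⟩⟩ b) i (σ i))
          = if (∀ i : I, (σ i).1 = i.1) then c else 0 := by
      intro σ
      by_cases h : ∀ i : I, (σ i).1 = i.1
      · rw [if_pos h]
        have : ∀ i : I, (Matrix.of fun (a b : I) =>
            Matrix.blockDiagonal' M ⟨a.1, ⟨0, hpos a.1⟩⟩ b) i (σ i)
              = 1 / (Real.sqrt (s i.1) : ℂ) := fun i => hUrow i.1 (σ i) (h i)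
        rw [Finset.prod_congr rfl fun i _ => this i]
        rw [hc, ← Finset.univ_sigma_univ, Finset.prod_sigma]
        exact Finset.prod_congr rfl fun j _ => by simp
      · rw [if_neg h]
        push_neg at h
        obtain ⟨i, hi⟩ := h
        exact Finset.prod_eq_zero (Finset.mem_univ i) (hUzero i.1 (σ i) hi)
    have hperm : perm (Matrix.of fun (a b : I) =>
        Matrix.blockDiagonal' M ⟨a.1, ⟨0, hpos a.1⟩⟩ b)
          = ((∏ j, (s j).factorial : ℕ) : ℂ) * c := by
      rw [perm, Finset.sum_congr rfl fun σ _ => hprod σ]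
      rw [Finset.sum_ite, Finset.sum_const, Finset.sum_const_zero, add_zero]
      rw [nsmul_eq_mul]
      congr 1
      rw [← Fintype.card_subtype, card_fiber_perms]
    rw [hperm]
    -- now real arithmetic
    have habs : ‖c‖ = ∏ j, (1 / Real.sqrt (s j)) ^ (s j) := by
      rw [hc, norm_prod]
      refine Finset.prod_congr rfl fun j _ => ?_
      rw [norm_pow]
      congr 1
      rw [norm_div, norm_one, Complex.norm_real, Real.norm_eq_abs,
        abs_of_pos (Real.sqrt_pos.2 (by exact_mod_cast hpos j))]
    have hN : (0:ℝ) < ((∏ j, (s j).factorial : ℕ) : ℝ) := by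
      exact_mod_cast Finset.prod_pos fun j _ => (s j).factorial_pos
    have hQ : (0:ℝ) < ∏ j, (s j : ℝ) ^ (s j) :=
      Finset.prod_pos fun j _ => pow_pos (by exact_mod_cast hpos j) _
    rw [norm_mul, Complex.norm_natCast, habs]
    have hp2 : (∏ j, (1 / Real.sqrt (s j)) ^ (s j)) ^ 2
        = 1 / ∏ j, (s j : ℝ) ^ (s j) := by
      rw [← Finset.prod_pow]
      rw [Finset.prod_congr rfl fun j _ => by
        rw [← pow_mul, mul_comm (s j) 2, pow_mul, div_pow, one_pow,
          Real.sq_sqrt (by positivity : (0:ℝ) ≤ (s j : ℝ))]]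
      simp [div_pow, one_div, Finset.prod_inv_distrib]
    rw [mul_pow, hp2]
    field_simp
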